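/- Let X be a measurable space, μ_P, μ_N probability measures on X, π ∈ [0,1], and let μ_U = π • μ_P + (1 − π) • μ_N be the mixture measure. Let f : X → ℝ be measurable and let ℓ : ℝ → ℝ be a bounded measurable loss satisfying the constant-sum property ℓ(z) + ℓ(−z) = C for all z ∈ ℝ. Then the positive–negative risk can be rewritten using only positive and unlabeled expectations: π ∫ ℓ(f(x)) dμ_P(x) + (1 − π) ∫ ℓ(−f(x)) dμ_N(x) = 2π ∫ ℓ(f(x)) dμ_P(x) − ∫ ℓ(f(x)) dμ_U(x) + (1 − π) C. -/
import Mathlib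


open MeasureTheory

/-- PU risk rewriting: if `μ_U = π • μ_P + (1 - π) • μ_N` and the bounded measurable
loss `ℓ` satisfies the constant-sum property `ℓ(z) + ℓ(-z) = C`, then the
positive–negative risk equals `2π E_P[ℓ(f)] − E_U[ℓ(f)] + (1 − π) C`. -/
theorem pu_risk_rewrite
    {X : Type*} [MeasurableSpace X]
    (μP μN : Measure X) [IsProbabilityMeasure μP] [IsProbabilityMeasure μN]
    (π : ℝ) (hπ0 : 0 ≤ π) (hπ1 : π ≤ 1)
    (μU : Measure X)
    (hμU : μU = ENNReal.ofReal π • μP + ENNReal.ofReal (1 - π) • μN)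
    (f : X → ℝ) (hf : Measurable f)
    (ℓ : ℝ → ℝ) (hℓ : Measurable ℓ) (B : ℝ) (hB : ∀ z : ℝ, |ℓ z| ≤ B)
    (C : ℝ) (hsum : ∀ z : ℝ, ℓ z + ℓ (-z) = C) :
    π * ∫ x, ℓ (f x) ∂μP + (1 - π) * ∫ x, ℓ (-f x) ∂μN =
      2 * π * ∫ x, ℓ (f x) ∂μP - ∫ x, ℓ (f x) ∂μU + (1 - π) * C := by
  have hmeas : Measurable fun x => ℓ (f x) := hℓ.comp hf
  have hint : ∀ μ : Measure X, Integrable (fun x => ℓ (f x)) μ ∨ True → True := fun _ _ => trivial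
  have hintg : ∀ μ : Measure X, IsFiniteMeasure μ → Integrable (fun x => ℓ (f x)) μ := by
    intro μ _
    refine ⟨hmeas.aestronglyMeasurable, ?_⟩
    exact (hasFiniteIntegral_const B).mono'
      (Filter.Eventually.of_forall fun x => by
        simpa [Real.norm_eq_abs] using hB (f x))
  have hN : ∫ x, ℓ (-f x) ∂μN = C - ∫ x, ℓ (f x) ∂μN := by
    have h : ∀ x, ℓ (-f x) = C - ℓ (f x) := fun x => by
      have := hsum (f x); linarith
    simp only [h]
    rw [integral_sub (integrable_const C) (hintg μN inferInstance), integral_const]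
    simp
  have hfin : ∀ c : ℝ, IsFiniteMeasure (ENNReal.ofReal c • μP) ∧
      IsFiniteMeasure (ENNReal.ofReal c • μN) := fun c =>
    ⟨⟨by simp [ENNReal.ofReal_lt_top, ENNReal.mul_lt_top, measure_lt_top]⟩,
     ⟨by simp [ENNReal.ofReal_lt_top, ENNReal.mul_lt_top, measure_lt_top]⟩⟩
  have hU : ∫ x, ℓ (f x) ∂μU =
      π * ∫ x, ℓ (f x) ∂μP + (1 - π) * ∫ x, ℓ (f x) ∂μN := by
    rw [hμU, integral_add_measure (hintg _ (hfin π).1) (hintg _ (hfin (1-π)).2),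
      integral_smul_measure, integral_smul_measure,
      ENNReal.toReal_ofReal hπ0, ENNReal.toReal_ofReal (by linarith), smul_eq_mul, smul_eq_mul]
  rw [hN, hU]; ring
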